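/- Let p0, p1, p2 ∈ R_{2,1} have no common zeros on P^1 × P^1. If p0, p1, p2 are generic, then Syz(p)_{2,n} = 0 for all n ≥ 3. -/

import Mathlib

open MvPolynomial

noncomputable section

/-- The bigraded polynomial ring `R = k[x,y,z,w]`; variables `0,1,2,3` are `x,y,z,w`. -/
abbrev Rk (k : Type*) [Field k] := MvPolynomial (Fin 4) k

/-- The bigrading: `x, y` have degree `(1,0)`; `z, w` have degree `(0,1)`. -/
def bidegWt : Fin 4 → ℤ × ℤ := ![(1, 0), (1, 0), (0, 1), (0, 1)]

/-- `p` is bihomogeneous of bidegree `(m, n)` (with the convention that only the zero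
polynomial is bihomogeneous of a bidegree with a negative coordinate). -/
def Bihom {k : Type*} [Field k] (p : Rk k) (m n : ℤ) : Prop :=
  p.IsWeightedHomogeneous bidegWt (m, n)

/-- `p0, p1, p2` have no common zeros on `ℙ¹ × ℙ¹`. -/
def NoCommonZeros {k : Type*} [Field k] (p0 p1 p2 : Rk k) : Prop :=
  ∀ a b c d : k, (a, b) ≠ (0, 0) → (c, d) ≠ (0, 0) →
    eval ![a, b, c, d] p0 ≠ 0 ∨ eval ![a, b, c, d] p1 ≠ 0 ∨ eval ![a, b, c, d] p2 ≠ 0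

/-- The map `(A0, A1, A2) ↦ A0 p0 + A1 p1 + A2 p2`, as a `k`-linear map on `R³`. -/
def syzMapk {k : Type*} [Field k] (p : Fin 3 → Rk k) : (Fin 3 → Rk k) →ₗ[k] Rk k :=
  ∑ i : Fin 3, (LinearMap.mulRight k (p i)).comp (LinearMap.proj i)

/-- The bigraded piece `Syz(p)_{m,n}`: triples `(A0, A1, A2)` of bihomogeneous polynomials of
bidegree `(m-2, n-1)` with `A0 p0 + A1 p1 + A2 p2 = 0`, as a `k`-subspace of `R³`. -/
def SyzPiece {k : Type*} [Field k] (p : Fin 3 → Rk k) (m n : ℤ) :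
    Submodule k (Fin 3 → Rk k) :=
  (Submodule.pi Set.univ fun _ => weightedHomogeneousSubmodule k bidegWt (m - 2, n - 1)) ⊓
    LinearMap.ker (syzMapk p)

/-- The syzygy module `Syz(p)`, as an `R`-submodule of `R³`. -/
def Syz {k : Type*} [Field k] (p : Fin 3 → Rk k) : Submodule (Rk k) (Fin 3 → Rk k) :=
  LinearMap.ker (∑ i : Fin 3, (LinearMap.mulRight (Rk k) (p i)).comp (LinearMap.proj i))

/-- The Koszul submodule of `R³`: the `R`-submodule generated by the three Koszul syzygies
`(p1, −p0, 0)`, `(p2, 0, −p0)`, `(0, p2, −p1)`. -/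
def KoszulSub {k : Type*} [Field k] (p0 p1 p2 : Rk k) : Submodule (Rk k) (Fin 3 → Rk k) :=
  Submodule.span (Rk k) {![p1, -p0, 0], ![p2, 0, -p0], ![0, p2, -p1]}

/-- `p0, p1, p2 ∈ R_{2,1}` are generic: only finitely many points `[a0 : a1 : a2]` of `ℙ²(k)`
are such that `a0 p0 + a1 p1 + a2 p2` factors as `q · l` with `q ∈ R_{2,0}`, `l ∈ R_{0,1}`. -/
def BidegGeneric {k : Type*} [Field k] (p0 p1 p2 : Rk k) : Prop :=
  {P : Projectivization k (Fin 3 → k) |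
    ∃ q l : Rk k, Bihom q 2 0 ∧ Bihom l 0 1 ∧
      P.rep 0 • p0 + P.rep 1 • p1 + P.rep 2 • p2 = q * l}.Finite

section AuxLemmas

variable {k : Type*} [Field k]

lemma weight_bideg (d : Fin 4 →₀ ℕ) :
    Finsupp.weight bidegWt d = (((d 0 : ℤ) + d 1, (d 2 : ℤ) + d 3) : ℤ × ℤ) := by
  rw [Finsupp.weight_apply, Finsupp.sum_fintype _ _ (fun i => by simp)]
  rw [Fin.sum_univ_four]
  simp [bidegWt, Prod.ext_iff, add_assoc]

lemma bihom_support {p : Rk k} {m n : ℤ} (h : Bihom p m n) {d : Fin 4 →₀ ℕ}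
    (hd : d ∈ p.support) : ((d 0 : ℤ) + d 1 = m) ∧ ((d 2 : ℤ) + d 3 = n) := by
  have := h (MvPolynomial.mem_support_iff.mp hd)
  rw [weight_bideg] at this
  have h1 := congrArg Prod.fst this
  have h2 := congrArg Prod.snd this
  constructor <;> simp_all

lemma eval_congr (p : Rk k) (v v' : Fin 4 → k)
    (h : ∀ d ∈ p.support, ∀ i, d i ≠ 0 → v i = v' i) : eval v p = eval v' p := by
  rw [eval_eq', eval_eq']
  refine Finset.sum_congr rfl fun d hd => ?_
  congr 1
  refine Finset.prod_congr rfl fun i _ => ?_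
  by_cases hi : d i = 0
  · rw [hi, pow_zero, pow_zero]
  · rw [h d hd i hi]

lemma eval_aeval' (g : Fin 4 → Polynomial k) (p : Rk k) (t : k) :
    (MvPolynomial.aeval g p).eval t = eval (fun i => (g i).eval t) p := by
  induction p using MvPolynomial.induction_on with
  | C a => simp [Polynomial.eval_C]
  | add p q hp hq => simp [hp, hq]
  | mul_X p i hp => simp [hp]

lemma pderiv_bihom {P : Rk k} (hP : Bihom P 2 1) (i : Fin 4) (hi : i = 2 ∨ i = 3) :
    Bihom (pderiv i P) 2 0 := by
  rw [show pderiv i P = pderiv i (∑ d ∈ P.support, monomial d (coeff d P)) by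
    rw [← MvPolynomial.as_sum]]
  rw [map_sum]
  rw [Bihom, ← mem_weightedHomogeneousSubmodule]
  apply Submodule.sum_mem
  intro d hd
  rw [pderiv_monomial, mem_weightedHomogeneousSubmodule]
  by_cases hdi : d i = 0
  · rw [hdi]; simp only [mul_zero, Nat.cast_zero]
    rw [map_zero (monomial _)]
    exact isWeightedHomogeneous_zero _ _ _
  · apply isWeightedHomogeneous_monomial
    obtain ⟨hxy, hzw⟩ := bihom_support hP hd
    rw [weight_bideg]
    have he : ∀ j, ((d - Finsupp.single i 1 : Fin 4 →₀ ℕ)) j = d j - (Finsupp.single i 1) j :=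
      fun j => Finsupp.tsub_apply d _ j
    have hzw' : d 2 + d 3 = 1 := by exact_mod_cast hzw
    rcases hi with rfl | rfl <;>
    · simp only [he, Finsupp.single_apply, Prod.ext_iff]
      constructor <;> · simp only [Fin.reduceEq, if_true, if_false, reduceIte]
                        omega

lemma euler21 {P : Rk k} (hP : Bihom P 2 1) :
    P = pderiv 2 P * X 2 + pderiv 3 P * X 3 := by
  have hX : ∀ i : Fin 4, (X i : Rk k) = monomial (Finsupp.single i 1) 1 := fun _ => rfl
  conv_lhs => rw [MvPolynomial.as_sum P]
  rw [show pderiv (2 : Fin 4) P = pderiv 2 (∑ d ∈ P.support, monomial d (coeff d P)) by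
        rw [← MvPolynomial.as_sum],
      show pderiv (3 : Fin 4) P = pderiv 3 (∑ d ∈ P.support, monomial d (coeff d P)) by
        rw [← MvPolynomial.as_sum]]
  rw [map_sum, map_sum, Finset.sum_mul, Finset.sum_mul, ← Finset.sum_add_distrib]
  refine Finset.sum_congr rfl fun d hd => ?_
  obtain ⟨hxy, hzw⟩ := bihom_support hP hd
  have hzw' : d 2 + d 3 = 1 := by exact_mod_cast hzw
  rw [pderiv_monomial, pderiv_monomial, hX, hX, monomial_mul, monomial_mul, mul_one, mul_one]
  by_cases h2 : d 2 = 0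
  · have h3 : d 3 = 1 := by omega
    rw [h2, h3]
    simp only [Nat.cast_zero, mul_zero, Nat.cast_one, mul_one]
    rw [map_zero (monomial _), zero_add, tsub_add_cancel_of_le]
    exact Finsupp.single_le_iff.mpr (by rw [h3])
  · have h2' : d 2 = 1 := by omega
    have h3 : d 3 = 0 := by omega
    rw [h2', h3]
    simp only [Nat.cast_zero, mul_zero, Nat.cast_one, mul_one]
    rw [map_zero (monomial _), add_zero, tsub_add_cancel_of_le]
    exact Finsupp.single_le_iff.mpr (by rw [h2'])

lemma exists_root_binary [IsAlgClosed k] (N : ℕ) (hN : 1 ≤ N) (D : Rk k)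
    (hsupp : ∀ d ∈ D.support, d 2 = 0 ∧ d 3 = 0 ∧ d 0 + d 1 = N) :
    ∃ a b : k, (a, b) ≠ ((0 : k), (0 : k)) ∧
      ∀ v : Fin 4 → k, v 0 = a → v 1 = b → eval v D = 0 := by
  set f : Polynomial k := MvPolynomial.aeval ![1, Polynomial.X, 1, 1] D with hf
  have hsum : f = ∑ d ∈ D.support, Polynomial.C (coeff d D) * Polynomial.X ^ (d 1) := by
    rw [hf, aeval_def, eval₂_eq']
    refine Finset.sum_congr rfl fun d hd => ?_
    obtain ⟨h2, h3, h01⟩ := hsupp d hd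
    rw [Fin.prod_univ_four]
    simp only [Matrix.cons_val_zero, Matrix.cons_val_one, Matrix.head_cons, h2, h3]
    simp [Polynomial.algebraMap_eq]
  have hcoeff : ∀ d₀ ∈ D.support, f.coeff (d₀ 1) = coeff d₀ D := by
    intro d₀ hd₀
    rw [hsum, Polynomial.finset_sum_coeff]
    rw [Finset.sum_eq_single d₀]
    · simp [Polynomial.coeff_C_mul, Polynomial.coeff_X_pow]
    · intro d hd hne
      rw [Polynomial.coeff_C_mul, Polynomial.coeff_X_pow, if_neg, mul_zero]
      intro heq
      apply hne
      obtain ⟨h2, h3, h01⟩ := hsupp d hd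
      obtain ⟨h2', h3', h01'⟩ := hsupp d₀ hd₀
      ext i
      fin_cases i
      · show d 0 = d₀ 0; omega
      · show d 1 = d₀ 1; omega
      · show d 2 = d₀ 2; omega
      · show d 3 = d₀ 3; omega
    · intro h; exact absurd hd₀ h
  have heval : ∀ t : k, ∀ v : Fin 4 → k, v 0 = 1 → v 1 = t → eval v D = f.eval t := by
    intro t v h0 h1
    rw [hf, eval_aeval']
    apply eval_congr
    intro d hd i hdi
    obtain ⟨h2, h3, h01⟩ := hsupp d hd
    fin_cases i
    · simp [h0]
    · simp [h1]
    · exact absurd h2 hdi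
    · exact absurd h3 hdi
  by_cases hf0 : f = 0
  · refine ⟨1, 0, by simp, fun v h0 h1 => ?_⟩
    rw [heval 0 v h0 h1, hf0, Polynomial.eval_zero]
  · by_cases hdeg : f.natDegree = 0
    · refine ⟨0, 1, by simp, fun v h0 h1 => ?_⟩
      rw [eval_eq']
      refine Finset.sum_eq_zero fun d hd => ?_
      obtain ⟨h2, h3, h01⟩ := hsupp d hd
      have hd1 : d 1 = 0 := by
        by_contra hd1
        have : d 1 ≤ f.natDegree := Polynomial.le_natDegree_of_ne_zero (by
          rw [hcoeff d hd]; exact mem_support_iff.mp hd)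
        omega
      have hd0 : d 0 ≠ 0 := by omega
      rw [Fin.prod_univ_four, h0, zero_pow hd0, zero_mul, zero_mul, zero_mul, mul_zero]
    · have : f.degree ≠ 0 := by
        intro h
        exact hdeg (Polynomial.natDegree_eq_zero_iff_degree_le_zero.mpr (le_of_eq h))
      obtain ⟨t, ht⟩ := IsAlgClosed.exists_root f this
      refine ⟨1, t, by simp, fun v h0 h1 => ?_⟩
      rw [heval t v h0 h1]
      exact ht

lemma kernel2 (α β γ δ : k) (h : α * δ - β * γ = 0) :
    ∃ c d : k, (c, d) ≠ ((0 : k), (0 : k)) ∧ α * c + β * d = 0 ∧ γ * c + δ * d = 0 := by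
  by_cases hab : α = 0 ∧ β = 0
  · by_cases hgd : γ = 0 ∧ δ = 0
    · exact ⟨1, 0, by simp, by simp [hab.1, hab.2], by simp [hgd.1, hgd.2]⟩
    · refine ⟨δ, -γ, ?_, by simp [hab.1, hab.2], by ring⟩
      simp only [Ne, Prod.mk.injEq, not_and]
      intro h1 h2
      exact hgd ⟨by simpa using h2, h1⟩
  · refine ⟨β, -α, ?_, by ring, by linear_combination -h⟩
    simp only [Ne, Prod.mk.injEq, not_and]
    intro h1 h2
    exact hab ⟨by simpa using h2, h1⟩

lemma eval_indep_zw {q : Rk k} (hq : Bihom q 2 0) (a b c d c' d' : k) :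
    eval ![a, b, c, d] q = eval ![a, b, c', d'] q := by
  apply eval_congr
  intro e he i hi
  have h23 : e 2 = 0 ∧ e 3 = 0 := by
    have := (bihom_support hq he).2
    constructor <;> omega
  fin_cases i
  · rfl
  · rfl
  · exact absurd h23.1 hi
  · exact absurd h23.2 hi

lemma eval_bihom21 {P : Rk k} (hP : Bihom P 2 1) (a b c d : k) :
    eval ![a, b, c, d] P =
      eval ![a, b, 0, 0] (pderiv 2 P) * c + eval ![a, b, 0, 0] (pderiv 3 P) * d := by
  conv_lhs => rw [euler21 hP]
  rw [map_add, map_mul, map_mul, eval_X, eval_X]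
  rw [eval_indep_zw (pderiv_bihom hP 2 (Or.inl rfl)) a b c d 0 0,
      eval_indep_zw (pderiv_bihom hP 3 (Or.inr rfl)) a b c d 0 0]
  norm_num
  rfl

lemma exists_common_zero [IsAlgClosed k] {P Q : Rk k} (hP : Bihom P 2 1) (hQ : Bihom Q 2 1) :
    ∃ a b c d : k, (a, b) ≠ ((0 : k), (0 : k)) ∧ (c, d) ≠ ((0 : k), (0 : k)) ∧
      eval ![a, b, c, d] P = 0 ∧ eval ![a, b, c, d] Q = 0 := by
  set D : Rk k := pderiv 2 P * pderiv 3 Q - pderiv 2 Q * pderiv 3 P with hD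
  have hDmem : D ∈ weightedHomogeneousSubmodule k bidegWt (4, 0) := by
    apply Submodule.sub_mem
    · have := (pderiv_bihom hP 2 (Or.inl rfl)).mul (pderiv_bihom hQ 3 (Or.inr rfl))
      rw [mem_weightedHomogeneousSubmodule]
      convert this using 2 <;> norm_num
    · have := (pderiv_bihom hQ 2 (Or.inl rfl)).mul (pderiv_bihom hP 3 (Or.inr rfl))
      rw [mem_weightedHomogeneousSubmodule]
      convert this using 2 <;> norm_num
  have hDsupp : ∀ e ∈ D.support, e 2 = 0 ∧ e 3 = 0 ∧ e 0 + e 1 = 4 := by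
    intro e he
    have h1 := (bihom_support (mem_weightedHomogeneousSubmodule _ _ _ D |>.mp hDmem) he).1
    have h2 := (bihom_support (mem_weightedHomogeneousSubmodule _ _ _ D |>.mp hDmem) he).2
    refine ⟨by omega, by omega, by omega⟩
  obtain ⟨a, b, hab, hroot⟩ := exists_root_binary 4 (by norm_num) D hDsupp
  have hD0 : eval ![a, b, 0, 0] (pderiv 2 P) * eval ![a, b, 0, 0] (pderiv 3 Q)
      - eval ![a, b, 0, 0] (pderiv 3 P) * eval ![a, b, 0, 0] (pderiv 2 Q) = 0 := by
    have := hroot ![a, b, 0, 0] (by simp) (by simp)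
    rw [hD] at this
    simp only [map_sub, map_mul] at this
    linear_combination this
  obtain ⟨c, d, hcd, hk1, hk2⟩ := kernel2 _ _ _ _ hD0
  exact ⟨a, b, c, d, hab, hcd, by rw [eval_bihom21 hP]; exact hk1,
    by rw [eval_bihom21 hQ]; exact hk2⟩

lemma no_lin_dep [IsAlgClosed k] {p0 p1 p2 : Rk k}
    (h0 : Bihom p0 2 1) (h1 : Bihom p1 2 1) (h2 : Bihom p2 2 1)
    (hncz : ∀ a b c d : k, (a, b) ≠ (0, 0) → (c, d) ≠ (0, 0) →
      eval ![a, b, c, d] p0 ≠ 0 ∨ eval ![a, b, c, d] p1 ≠ 0 ∨ eval ![a, b, c, d] p2 ≠ 0)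
    (lam : Fin 3 → k) (hlam : lam ≠ 0)
    (hrel : lam 0 • p0 + lam 1 • p1 + lam 2 • p2 = 0) : False := by
  have hev : ∀ v : Fin 4 → k,
      lam 0 * eval v p0 + lam 1 * eval v p1 + lam 2 * eval v p2 = 0 := by
    intro v
    have := congrArg (eval v) hrel
    simpa [MvPolynomial.smul_eq_C_mul] using this
  obtain ⟨i, hi⟩ := Function.ne_iff.mp hlam
  simp only [Pi.zero_apply] at hi
  fin_cases i
  · have hi' : lam 0 ≠ 0 := hi
    obtain ⟨a, b, c, d, hab, hcd, hz1, hz2⟩ := exists_common_zero h1 h2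
    have h := hev ![a, b, c, d]
    rw [hz1, hz2] at h
    have hz0 : eval ![a, b, c, d] p0 = 0 := by
      rcases mul_eq_zero.mp (by linear_combination h : lam 0 * eval ![a, b, c, d] p0 = 0)
        with h' | h'
      · exact absurd h' hi'
      · exact h'
    rcases hncz a b c d hab hcd with h' | h' | h'
    · exact h' hz0
    · exact h' hz1
    · exact h' hz2
  · have hi' : lam 1 ≠ 0 := hi
    obtain ⟨a, b, c, d, hab, hcd, hz1, hz2⟩ := exists_common_zero h0 h2
    have h := hev ![a, b, c, d]
    rw [hz1, hz2] at h
    have hz0 : eval ![a, b, c, d] p1 = 0 := by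
      rcases mul_eq_zero.mp (by linear_combination h : lam 1 * eval ![a, b, c, d] p1 = 0)
        with h' | h'
      · exact absurd h' hi'
      · exact h'
    rcases hncz a b c d hab hcd with h' | h' | h'
    · exact h' hz1
    · exact h' hz0
    · exact h' hz2
  · have hi' : lam 2 ≠ 0 := hi
    obtain ⟨a, b, c, d, hab, hcd, hz1, hz2⟩ := exists_common_zero h0 h1
    have h := hev ![a, b, c, d]
    rw [hz1, hz2] at h
    have hz0 : eval ![a, b, c, d] p2 = 0 := by
      rcases mul_eq_zero.mp (by linear_combination h : lam 2 * eval ![a, b, c, d] p2 = 0)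
        with h' | h'
      · exact absurd h' hi'
      · exact h'
    rcases hncz a b c d hab hcd with h' | h' | h'
    · exact h' hz1
    · exact h' hz2
    · exact h' hz0

lemma factor21 [Infinite k] {G : Rk k} (hG : Bihom G 2 1) (t : k)
    (h : ∀ x y : k, eval ![x, y, 1, t] G = 0) :
    ∃ q l : Rk k, Bihom q 2 0 ∧ Bihom l 0 1 ∧ G = q * l := by
  have hq := pderiv_bihom hG 2 (Or.inl rfl)
  have hr := pderiv_bihom hG 3 (Or.inr rfl)
  have congr_zw : ∀ {q : Rk k}, Bihom q 2 0 → ∀ v : Fin 4 → k,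
      eval v q = eval ![v 0, v 1, 0, 0] q := by
    intro q hq' v
    apply eval_congr
    intro e he i hi
    have h23 : e 2 = 0 ∧ e 3 = 0 := by
      have := (bihom_support hq' he).2
      constructor <;> omega
    fin_cases i
    · simp
    · simp
    · exact absurd h23.1 hi
    · exact absurd h23.2 hi
  have key : pderiv 2 G + t • pderiv 3 G = 0 := by
    apply MvPolynomial.funext
    intro v
    rw [map_add, map_zero]
    rw [MvPolynomial.smul_eq_C_mul, map_mul, eval_C]
    rw [congr_zw hq v, congr_zw hr v]
    have := eval_bihom21 hG (v 0) (v 1) 1 t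
    rw [h (v 0) (v 1)] at this
    linear_combination -this
  refine ⟨pderiv 3 G, X 3 - C t * X 2, hr, ?_, ?_⟩
  · show X 3 - C t * X 2 ∈ weightedHomogeneousSubmodule k bidegWt (0, 1)
    apply Submodule.sub_mem
    · rw [mem_weightedHomogeneousSubmodule]
      have := isWeightedHomogeneous_X k bidegWt (3 : Fin 4)
      convert this using 2 <;> simp [bidegWt]
    · rw [mem_weightedHomogeneousSubmodule]
      have := (isWeightedHomogeneous_C bidegWt t).mul (isWeightedHomogeneous_X k bidegWt (2 : Fin 4))
      convert this using 2 <;> simp [bidegWt]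
  · have hqe : pderiv 2 G = -(t • pderiv 3 G) := by
      rw [eq_neg_of_add_eq_zero_left key]
    conv_lhs => rw [euler21 hG, hqe]
    rw [MvPolynomial.smul_eq_C_mul]
    ring

lemma dehom_inj {B : Rk k} {N : ℤ} (hB : Bihom B 0 N)
    (h : MvPolynomial.aeval ![1, 1, 1, (Polynomial.X : Polynomial k)] B = 0) : B = 0 := by
  by_contra hB0
  obtain ⟨d₀, hd₀⟩ := MvPolynomial.ne_zero_iff.mp hB0
  have hsupp : ∀ d ∈ B.support, d 0 = 0 ∧ d 1 = 0 ∧ (d 2 : ℤ) + d 3 = N := by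
    intro d hd
    have h1 := (bihom_support hB hd).1
    have h2 := (bihom_support hB hd).2
    exact ⟨by omega, by omega, h2⟩
  have hsum : MvPolynomial.aeval ![1, 1, 1, (Polynomial.X : Polynomial k)] B
      = ∑ d ∈ B.support, Polynomial.C (coeff d B) * Polynomial.X ^ (d 3) := by
    rw [aeval_def, eval₂_eq']
    refine Finset.sum_congr rfl fun d hd => ?_
    rw [Fin.prod_univ_four]
    simp [Polynomial.algebraMap_eq]
  have hc : (MvPolynomial.aeval ![1, 1, 1, (Polynomial.X : Polynomial k)] B).coeff (d₀ 3)
      = coeff d₀ B := by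
    rw [hsum, Polynomial.finset_sum_coeff, Finset.sum_eq_single d₀]
    · simp
    · intro d hd hne
      rw [Polynomial.coeff_C_mul, Polynomial.coeff_X_pow, if_neg, mul_zero]
      intro heq
      apply hne
      obtain ⟨a1, a2, a3⟩ := hsupp d hd
      obtain ⟨b1, b2, b3⟩ := hsupp d₀ (mem_support_iff.mpr hd₀)
      ext i
      fin_cases i
      · show d 0 = d₀ 0; omega
      · show d 1 = d₀ 1; omega
      · show d 2 = d₀ 2; omega
      · show d 3 = d₀ 3; omega
    · intro hcon; exact absurd (mem_support_iff.mpr hd₀) hcon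
  rw [h] at hc
  exact hd₀ (by simpa using hc.symm)

end AuxLemmas

set_option maxHeartbeats 1000000 in
/-- In the generic case, `Syz(p)_{2,n} = 0` for all `n ≥ 3`. -/
theorem statement5 {k : Type*} [Field k] [IsAlgClosed k] (p0 p1 p2 : Rk k)
    (h0 : Bihom p0 2 1) (h1 : Bihom p1 2 1) (h2 : Bihom p2 2 1)
    (hncz : NoCommonZeros p0 p1 p2) (hgen : BidegGeneric p0 p1 p2) :
    ∀ n : ℤ, 3 ≤ n → SyzPiece ![p0, p1, p2] 2 n = ⊥ := by
  intro n _hn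
  rw [eq_bot_iff]
  intro A hA
  rw [Submodule.mem_bot]
  rw [SyzPiece, Submodule.mem_inf] at hA
  obtain ⟨hApi, hAker⟩ := hA
  rw [Submodule.mem_pi] at hApi
  have hhom : ∀ i : Fin 3, Bihom (A i) 0 (n - 1) := by
    intro i
    have h := hApi i (Set.mem_univ i)
    rw [mem_weightedHomogeneousSubmodule] at h
    have h22 : (((2 : ℤ) - 2, n - 1) : ℤ × ℤ) = ((0 : ℤ), n - 1) := by norm_num
    rw [h22] at h
    exact h
  have hsyz : A 0 * p0 + A 1 * p1 + A 2 * p2 = 0 := by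
    have h := hAker
    rw [LinearMap.mem_ker] at h
    simp only [syzMapk, LinearMap.sum_apply, LinearMap.comp_apply, LinearMap.proj_apply,
      LinearMap.mulRight_apply, Fin.sum_univ_three, Matrix.cons_val_zero, Matrix.cons_val_one,
      Matrix.head_cons] at h
    convert h using 3
    rfl
  by_contra hA0
  obtain ⟨j₀, hj₀⟩ := Function.ne_iff.mp hA0
  simp only [Pi.zero_apply] at hj₀
  classical
  set g : Fin 4 → Polynomial k := ![1, 1, 1, Polynomial.X] with hg
  set f : Fin 3 → Polynomial k := fun i => MvPolynomial.aeval g (A i) with hfdef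
  have hfj : f j₀ ≠ 0 := fun hc => hj₀ (dehom_inj (hhom j₀) hc)
  set v : k → Fin 3 → k := fun t i => eval ![(1 : k), 1, 1, t] (A i) with hv
  have hveval : ∀ (t : k) (i : Fin 3), v t i = (f i).eval t := by
    intro t i
    have h1 : (f i).eval t = eval (fun j => (g j).eval t) (A i) := eval_aeval' g (A i) t
    have hvec : (fun j => (g j).eval t) = ![(1 : k), 1, 1, t] := by
      funext j
      fin_cases j <;> simp [hg]
    rw [h1, hvec]
  have hT : {t : k | v t ≠ 0}.Infinite := by
    have hZ : {t : k | v t = 0}.Finite := by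
      apply Set.Finite.subset (Polynomial.finite_setOf_isRoot hfj)
      intro t ht
      show (f j₀).eval t = 0
      rw [← hveval]
      exact congrFun ht j₀
    have := hZ.infinite_compl
    rwa [Set.compl_setOf] at this
  have hbad : ∀ (t : k) (ht : v t ≠ 0), (Projectivization.mk k (v t) ht) ∈
      {P : Projectivization k (Fin 3 → k) | ∃ q l : Rk k, Bihom q 2 0 ∧ Bihom l 0 1 ∧
        P.rep 0 • p0 + P.rep 1 • p1 + P.rep 2 • p2 = q * l} := by
    intro t ht
    set G : Rk k := v t 0 • p0 + v t 1 • p1 + v t 2 • p2 with hG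
    have hGmem : Bihom G 2 1 := by
      show G ∈ weightedHomogeneousSubmodule k bidegWt ((2 : ℤ), (1 : ℤ))
      exact Submodule.add_mem _ (Submodule.add_mem _ (Submodule.smul_mem _ _ h0)
        (Submodule.smul_mem _ _ h1)) (Submodule.smul_mem _ _ h2)
    have hGzero : ∀ x y : k, eval ![x, y, 1, t] G = 0 := by
      intro x y
      have hz : eval ![x, y, 1, t] (A 0 * p0 + A 1 * p1 + A 2 * p2) = 0 := by
        rw [hsyz]; simp
      have hAe : ∀ i : Fin 3, eval ![x, y, 1, t] (A i) = v t i := by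
        intro i
        rw [hv]
        apply eval_congr
        intro d hd j hj
        have h01 : d 0 = 0 ∧ d 1 = 0 := by
          have := (bihom_support (hhom i) hd).1
          constructor <;> omega
        fin_cases j
        · exact absurd h01.1 hj
        · exact absurd h01.2 hj
        · simp
        · simp
      rw [hG]
      simp only [map_add, map_mul, MvPolynomial.smul_eq_C_mul, eval_C] at hz ⊢
      rw [hAe 0, hAe 1, hAe 2] at hz
      linear_combination hz
    obtain ⟨q, l, hq, hl, hfac⟩ := factor21 hGmem t hGzero
    obtain ⟨u, hu⟩ := Projectivization.exists_smul_eq_mk_rep k (v t) ht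
    refine ⟨(u : k) • q, l, ?_, hl, ?_⟩
    · show (u : k) • q ∈ weightedHomogeneousSubmodule k bidegWt ((2 : ℤ), (0 : ℤ))
      exact Submodule.smul_mem _ _ hq
    have hrep : ∀ i : Fin 3, (Projectivization.mk k (v t) ht).rep i = (u : k) * v t i := by
      intro i
      rw [← hu]
      simp [Units.smul_def]
    rw [hrep 0, hrep 1, hrep 2]
    have hsm : ((u : k) * v t 0) • p0 + ((u : k) * v t 1) • p1 + ((u : k) * v t 2) • p2
        = (u : k) • G := by
      rw [hG]
      simp [smul_add, mul_smul]
    rw [hsm, hfac, smul_mul_assoc]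
  haveI hfin : Finite ↥{P : Projectivization k (Fin 3 → k) |
      ∃ q l : Rk k, Bihom q 2 0 ∧ Bihom l 0 1 ∧
        P.rep 0 • p0 + P.rep 1 • p1 + P.rep 2 • p2 = q * l} := hgen.to_subtype
  haveI hinf : Infinite ↥{t : k | v t ≠ 0} := hT.to_subtype
  set φ : ↥{t : k | v t ≠ 0} → ↥{P : Projectivization k (Fin 3 → k) |
      ∃ q l : Rk k, Bihom q 2 0 ∧ Bihom l 0 1 ∧
        P.rep 0 • p0 + P.rep 1 • p1 + P.rep 2 • p2 = q * l} :=
    fun t => ⟨Projectivization.mk k (v t.1) t.2, hbad t.1 t.2⟩ with hφ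
  obtain ⟨y, hy⟩ := Finite.exists_infinite_fiber φ
  have hSinf : {t : k | ∃ h : v t ≠ 0,
      Projectivization.mk k (v t) h = (y : Projectivization k (Fin 3 → k))}.Infinite := by
    have h1 : (φ ⁻¹' {y}).Infinite := Set.infinite_coe_iff.mp hy
    have h2 := h1.image (Subtype.val_injective.injOn)
    apply h2.mono
    rintro x ⟨⟨t, ht⟩, hmem, rfl⟩
    refine ⟨ht, ?_⟩
    have := Set.mem_preimage.mp hmem
    rw [Set.mem_singleton_iff] at this
    exact congrArg Subtype.val this
  obtain ⟨t₀, ht₀⟩ := hSinf.nonempty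
  obtain ⟨ht₀ne, ht₀mk⟩ := ht₀
  set lam : Fin 3 → k := v t₀ with hlam
  obtain ⟨j, hj⟩ := Function.ne_iff.mp ht₀ne
  simp only [Pi.zero_apply] at hj
  have heq : ∀ i : Fin 3, lam j • A i = lam i • A j := by
    intro i
    have hroots : ∀ t ∈ {t : k | ∃ h : v t ≠ 0,
        Projectivization.mk k (v t) h = (y : Projectivization k (Fin 3 → k))},
        (lam j • f i - lam i • f j).eval t = 0 := by
      intro t ⟨htne, htmk⟩
      have hmm : Projectivization.mk k (v t) htne = Projectivization.mk k (v t₀) ht₀ne := by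
        rw [htmk, ht₀mk]
      obtain ⟨a, ha⟩ := (Projectivization.mk_eq_mk_iff k _ _ htne ht₀ne).mp hmm
      have hvt : ∀ i' : Fin 3, v t i' = (a : k) * lam i' := by
        intro i'
        rw [← ha]
        simp [hlam, Units.smul_def]
      simp only [Polynomial.eval_sub, Polynomial.eval_smul, smul_eq_mul]
      rw [← hveval, ← hveval, hvt i, hvt j]
      ring
    have hzero : lam j • f i - lam i • f j = 0 := by
      apply Polynomial.eq_zero_of_infinite_isRoot
      apply hSinf.mono
      intro t ht
      exact hroots t ht
    have hB : lam j • A i - lam i • A j = 0 := by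
      apply dehom_inj (N := n - 1)
      · show lam j • A i - lam i • A j ∈ weightedHomogeneousSubmodule k bidegWt ((0 : ℤ), n - 1)
        exact Submodule.sub_mem _ (Submodule.smul_mem _ _ (hhom i))
          (Submodule.smul_mem _ _ (hhom j))
      · rw [map_sub, map_smul, map_smul]
        exact hzero
    exact sub_eq_zero.mp hB
  have hAj : A j ≠ 0 := by
    intro hc
    apply hj
    rw [hlam, hv]
    simp only
    rw [hc]
    simp
  have hprod : A j * (C (lam 0) * p0 + C (lam 1) * p1 + C (lam 2) * p2) = 0 := by
    have e0 : C (lam j) * A 0 = C (lam 0) * A j := by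
      have := heq 0; rwa [MvPolynomial.smul_eq_C_mul, MvPolynomial.smul_eq_C_mul] at this
    have e1 : C (lam j) * A 1 = C (lam 1) * A j := by
      have := heq 1; rwa [MvPolynomial.smul_eq_C_mul, MvPolynomial.smul_eq_C_mul] at this
    have e2 : C (lam j) * A 2 = C (lam 2) * A j := by
      have := heq 2; rwa [MvPolynomial.smul_eq_C_mul, MvPolynomial.smul_eq_C_mul] at this
    linear_combination C (lam j) * hsyz - p0 * e0 - p1 * e1 - p2 * e2
  have hlc : C (lam 0) * p0 + C (lam 1) * p1 + C (lam 2) * p2 = 0 := by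
    rcases mul_eq_zero.mp hprod with hcc | hcc
    · exact absurd hcc hAj
    · exact hcc
  refine no_lin_dep h0 h1 h2 hncz lam (Function.ne_iff.mpr ⟨j, by simpa using hj⟩) ?_
  rw [MvPolynomial.smul_eq_C_mul, MvPolynomial.smul_eq_C_mul, MvPolynomial.smul_eq_C_mul]
  exact hlc
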